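/- If p is an odd prime with p ≡ 5 (mod 9), then 2p is not a cube sum, i.e. there are no nonzero rational numbers a and b with a³ + b³ = 2p. -/

import Mathlib

/-- Eisenstein integers `a + b ω` where `ω² + ω + 1 = 0`. -/
@[ext]
structure Eis : Type where
  a : ℤ
  b : ℤ
deriving DecidableEq

namespace Eis

instance : Zero Eis := ⟨⟨0,0⟩⟩
instance : One Eis := ⟨⟨1,0⟩⟩
instance : Add Eis := ⟨fun x y => ⟨x.a+y.a, x.b+y.b⟩⟩
instance : Neg Eis := ⟨fun x => ⟨-x.a, -x.b⟩⟩
instance : Mul Eis := ⟨fun x y => ⟨x.a*y.a - x.b*y.b, x.a*y.b + x.b*y.a - x.b*y.b⟩⟩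

@[simp] lemma zero_a : (0 : Eis).a = 0 := rfl
@[simp] lemma zero_b : (0 : Eis).b = 0 := rfl
@[simp] lemma one_a : (1 : Eis).a = 1 := rfl
@[simp] lemma one_b : (1 : Eis).b = 0 := rfl
@[simp] lemma add_a (x y : Eis) : (x + y).a = x.a + y.a := rfl
@[simp] lemma add_b (x y : Eis) : (x + y).b = x.b + y.b := rfl
@[simp] lemma neg_a (x : Eis) : (-x).a = -x.a := rfl
@[simp] lemma neg_b (x : Eis) : (-x).b = -x.b := rfl
@[simp] lemma mul_a (x y : Eis) : (x * y).a = x.a*y.a - x.b*y.b := rfl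
@[simp] lemma mul_b (x y : Eis) : (x * y).b = x.a*y.b + x.b*y.a - x.b*y.b := rfl
@[simp] lemma mk_a (x y : ℤ) : (Eis.mk x y).a = x := rfl
@[simp] lemma mk_b (x y : ℤ) : (Eis.mk x y).b = y := rfl


instance instCommRing : CommRing Eis where
  add_assoc := by intros; ext <;> simp <;> ring
  zero_add := by intros; ext <;> simp
  add_zero := by intros; ext <;> simp
  add_comm := by intros; ext <;> simp <;> ring
  mul_assoc := by intros; ext <;> simp <;> ring
  one_mul := by intros; ext <;> simp
  mul_one := by intros; ext <;> simp
  left_distrib := by intros; ext <;> simp <;> ring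
  right_distrib := by intros; ext <;> simp <;> ring
  mul_comm := by intros; ext <;> simp <;> ring
  zero_mul := by intros; ext <;> simp
  mul_zero := by intros; ext <;> simp
  neg_add_cancel := by intros; ext <;> simp
  natCast := fun n => ⟨n, 0⟩
  natCast_zero := by ext <;> simp
  natCast_succ := by intros; ext <;> simp
  intCast := fun n => ⟨n, 0⟩
  intCast_ofNat := by intros; ext <;> rfl
  intCast_negSucc := fun n => by
    ext
    · show Int.negSucc n = -((n+1 : ℕ) : ℤ)
      simp [Int.negSucc_eq]
    · show (0:ℤ) = -(0:ℤ)
      simp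
  nsmul := fun n x => ⟨n * x.a, n * x.b⟩
  nsmul_zero := by intros; ext <;> (show ((0:ℕ):ℤ) * _ = _; simp)
  nsmul_succ := by intro n x; ext <;> (show ((n+1:ℕ):ℤ) * _ = ((n:ℕ):ℤ) * _ + _; push_cast; ring)
  zsmul := fun n x => ⟨n * x.a, n * x.b⟩
  zsmul_zero' := by intros; ext <;> (show (0:ℤ) * _ = _; simp)
  zsmul_succ' := by intro n x; ext <;> (show ((n.succ:ℕ):ℤ) * _ = ((n:ℕ):ℤ) * _ + _; push_cast; ring)
  zsmul_neg' := by intro n x; ext <;> (show Int.negSucc n * _ = -(((n.succ:ℕ):ℤ) * _); rw [Int.negSucc_eq]; push_cast; ring)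

@[simp] lemma sub_a' (x y : Eis) : (x - y).a = x.a - y.a := by
  change x.a + -y.a = _; ring
@[simp] lemma sub_b' (x y : Eis) : (x - y).b = x.b - y.b := by
  change x.b + -y.b = _; ring

@[simp] lemma intCast_a (n : ℤ) : (n : Eis).a = n := rfl
@[simp] lemma intCast_b (n : ℤ) : (n : Eis).b = 0 := rfl

lemma smul_mk (n x y : ℤ) : (n : Eis) * ⟨x, y⟩ = ⟨n*x, n*y⟩ := by
  ext <;> simp

/-- the norm -/
def norm (x : Eis) : ℤ := x.a^2 - x.a * x.b + x.b^2

lemma norm_mul (x y : Eis) : norm (x * y) = norm x * norm y := by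
  simp [norm]; ring

lemma norm_nonneg (x : Eis) : 0 ≤ norm x := by
  have h : (4:ℤ) * norm x = (2*x.a - x.b)^2 + 3 * x.b^2 := by simp [norm]; ring
  nlinarith [sq_nonneg (2*x.a - x.b), sq_nonneg x.b]

@[simp] lemma norm_zero_iff (x : Eis) : norm x = 0 ↔ x = 0 := by
  constructor
  · intro h
    have h4 : (2*x.a - x.b)^2 + 3 * x.b^2 = 0 := by simp [norm] at h; nlinarith
    have hb : x.b = 0 := by nlinarith [sq_nonneg (2*x.a - x.b), sq_nonneg x.b]
    have ha : x.a = 0 := by nlinarith [sq_nonneg (2*x.a - x.b)]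
    ext <;> simp [ha, hb]
  · rintro rfl; simp [norm]

instance instNontrivial : Nontrivial Eis := ⟨⟨0, 1, by decide⟩⟩

instance : NoZeroDivisors Eis := by
  constructor
  intro x y h
  by_contra hcon
  push_neg at hcon
  have h1 : norm x * norm y = 0 := by rw [← norm_mul, h]; simp [norm]
  rcases mul_eq_zero.1 h1 with h2 | h2 <;>
    [exact hcon.1 ((norm_zero_iff _).1 h2); exact hcon.2 ((norm_zero_iff _).1 h2)]

instance : IsDomain Eis := NoZeroDivisors.to_isDomain _

/-- conjugation -/
def conj (x : Eis) : Eis := ⟨x.a - x.b, -x.b⟩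

lemma intCast_mk (n : ℤ) : (n : Eis) = ⟨n, 0⟩ := rfl

lemma mul_conj (x : Eis) : x * conj x = ⟨norm x, 0⟩ := by
  ext <;> simp [conj, norm] <;> ring

lemma norm_conj (x : Eis) : norm (conj x) = norm x := by
  simp [conj, norm]; ring

lemma norm_dvd_of_dvd {x y : Eis} (h : x ∣ y) : norm x ∣ norm y := by
  obtain ⟨c, rfl⟩ := h
  exact ⟨norm c, norm_mul x c⟩

/-- division with rounding -/
instance : Div Eis :=
  ⟨fun x y =>
    let d := norm y
    let z := x * conj y
    ⟨round ((z.a : ℚ) / d), round ((z.b : ℚ) / d)⟩⟩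

lemma div_def (x y : Eis) : x / y =
    ⟨round (((x * conj y).a : ℚ) / norm y), round (((x * conj y).b : ℚ) / norm y)⟩ := rfl

instance : Mod Eis := ⟨fun x y => x - y * (x / y)⟩

lemma mod_def (x y : Eis) : x % y = x - y * (x / y) := rfl

lemma quot_err {n d q : ℤ} (hd : 0 < d) (hq : q = round ((n : ℚ) / d)) :
    2 * |n - q * d| ≤ d := by
  have h : |(n:ℚ)/d - (q:ℚ)| ≤ 1/2 := by rw [hq]; exact abs_sub_round _
  have hd' : (0:ℚ) < (d:ℚ) := by exact_mod_cast hd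
  have h2 : |(n:ℚ) - (q:ℚ)*(d:ℚ)| ≤ (d:ℚ)/2 := by
    have e : (n:ℚ) - (q:ℚ)*(d:ℚ) = ((n:ℚ)/d - (q:ℚ))*(d:ℚ) := by field_simp
    rw [e, abs_mul, abs_of_pos hd']
    calc |(n:ℚ)/d - (q:ℚ)| * (d:ℚ) ≤ (1/2) * d :=
          mul_le_mul_of_nonneg_right h (le_of_lt hd')
      _ = (d:ℚ)/2 := by ring
  have h3 : ((2 * |n - q * d| : ℤ) : ℚ) ≤ (d:ℚ) := by
    push_cast
    linarith [h2]
  exact_mod_cast h3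

lemma norm_mod_lt (x : Eis) {y : Eis} (hy : y ≠ 0) : norm (x % y) < norm y := by
  have hd : 0 < norm y := lt_of_le_of_ne (norm_nonneg y) (by
    intro h; exact hy ((norm_zero_iff y).1 h.symm))
  set d := norm y with hdd
  set z := x * conj y with hz
  set q := x / y with hq
  have hqa : q.a = round ((z.a : ℚ) / d) := rfl
  have hqb : q.b = round ((z.b : ℚ) / d) := rfl
  have e1 := quot_err (n := z.a) (q := q.a) hd hqa
  have e2 := quot_err (n := z.b) (q := q.b) hd hqb
  have key : (x % y) * conj y = ⟨z.a - q.a * d, z.b - q.b * d⟩ := by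
    have h1 : y * conj y = (⟨d, 0⟩ : Eis) := mul_conj y
    have h2 : (x % y) * conj y = z - q * ⟨d, 0⟩ := by
      rw [mod_def, ← h1, hz]; ring
    rw [h2]; ext <;> simp [sub_a', sub_b'] <;> ring
  have hnorm : norm (x % y) * d = norm ⟨z.a - q.a * d, z.b - q.b * d⟩ := by
    have : norm ((x % y) * conj y) = norm (x % y) * d := by
      rw [norm_mul, norm_conj]
    rw [← this, key]
  set e₁ := z.a - q.a * d
  set e₂ := z.b - q.b * d
  have habs1 : 2 * |e₁| ≤ d := e1
  have habs2 : 2 * |e₂| ≤ d := e2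
  have hval : norm ⟨e₁, e₂⟩ = e₁^2 - e₁*e₂ + e₂^2 := rfl
  have hb : 4 * (e₁^2 - e₁*e₂ + e₂^2) ≤ 3 * d^2 := by
    nlinarith [abs_nonneg e₁, abs_nonneg e₂, sq_abs e₁, sq_abs e₂,
      abs_mul e₁ e₂, abs_nonneg (e₁*e₂), neg_abs_le (e₁*e₂), le_abs_self (e₁*e₂),
      mul_le_mul habs1 habs2 (by positivity) (by linarith [abs_nonneg e₁])]
  have : 4 * (norm (x % y) * d) ≤ 3 * d^2 := by rw [hnorm, hval]; exact hb
  nlinarith [hd]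

lemma natAbs_norm_mod_lt (x : Eis) {y : Eis} (hy : y ≠ 0) :
    (norm (x % y)).natAbs < (norm y).natAbs := by
  have h := norm_mod_lt x hy
  have h1 := norm_nonneg (x % y)
  have h2 := norm_nonneg y
  omega

instance : EuclideanDomain Eis :=
  { Eis.instCommRing, Eis.instNontrivial with
    quotient := (· / ·)
    remainder := (· % ·)
    quotient_zero := fun x => by
      apply Eis.ext <;> simp [div_def, conj, norm]
    quotient_mul_add_remainder_eq := fun x y => by
      show y * (x / y) + (x - y * (x / y)) = x
      ring
    r := fun x y => (norm x).natAbs < (norm y).natAbs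
    r_wellFounded := (measure (Int.natAbs ∘ norm)).wf
    remainder_lt := fun x y hy => natAbs_norm_mod_lt x hy
    mul_left_not_lt := by
      intro x y hy
      apply not_lt_of_ge
      rw [norm_mul, Int.natAbs_mul]
      apply Nat.le_mul_of_pos_right
      exact Int.natAbs_pos.mpr (fun h => hy ((norm_zero_iff y).1 h)) }

end Eis

namespace Eis

lemma one_def : (1 : Eis) = ⟨1, 0⟩ := rfl

lemma isUnit_iff_norm {x : Eis} : IsUnit x ↔ norm x = 1 := by
  constructor
  · rintro ⟨u, rfl⟩
    have h1 : (u : Eis) * ((u⁻¹ : Eisˣ) : Eis) = 1 := u.mul_inv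
    have h2 : norm (u : Eis) * norm ((u⁻¹ : Eisˣ) : Eis) = 1 := by
      rw [← norm_mul, h1]; rfl
    exact Int.eq_one_of_mul_eq_one_right (norm_nonneg _) h2
  · intro h
    refine IsUnit.of_mul_eq_one (conj x) ?_
    rw [mul_conj, h, one_def]

lemma unit_cases {e : Eis} (h : IsUnit e) :
    e = ⟨1,0⟩ ∨ e = ⟨-1,0⟩ ∨ e = ⟨0,1⟩ ∨ e = ⟨0,-1⟩ ∨ e = ⟨1,1⟩ ∨ e = ⟨-1,-1⟩ := by
  have hn : e.a^2 - e.a*e.b + e.b^2 = 1 := isUnit_iff_norm.1 h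
  obtain ⟨x, y⟩ := e
  simp only [mk_a, mk_b] at hn ⊢
  have hx1 : -1 ≤ x := by nlinarith [sq_nonneg (x+1), sq_nonneg (2*y-x), sq_nonneg (x-1)]
  have hx2 : x ≤ 1 := by nlinarith [sq_nonneg (x-1), sq_nonneg (2*y-x), sq_nonneg (x+1)]
  have hy1 : -1 ≤ y := by nlinarith [sq_nonneg (y+1), sq_nonneg (2*x-y), sq_nonneg (y-1)]
  have hy2 : y ≤ 1 := by nlinarith [sq_nonneg (y-1), sq_nonneg (2*x-y), sq_nonneg (y+1)]
  interval_cases x <;> interval_cases y <;> simp_all [Eis.ext_iff] <;> omega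

lemma pow3_def (x : Eis) : x^3 = x * x * x := by ring

lemma pow3_a (x : Eis) : (x^3).a = x.a^3 - 3*x.a*x.b^2 + x.b^3 := by
  rw [pow3_def]; simp; ring

lemma pow3_b (x : Eis) : (x^3).b = 3*x.a^2*x.b - 3*x.a*x.b^2 := by
  rw [pow3_def]; simp; ring

lemma zmod2_cast_parity {k : ℤ} : (k : ZMod 2) = 0 ↔ (2:ℤ) ∣ k :=
  ZMod.intCast_zmod_eq_zero_iff_dvd k 2

lemma int_two_dvd_iff_even {k : ℤ} : (2:ℤ) ∣ k ↔ Even k := ⟨fun ⟨c,hc⟩ => ⟨c, by omega⟩, fun ⟨c,hc⟩ => ⟨c, by omega⟩⟩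

lemma int_odd_iff_not_two_dvd {k : ℤ} : Odd k ↔ ¬ ((2:ℤ) ∣ k) := by
  rw [int_two_dvd_iff_even, ← Int.not_even_iff_odd]

lemma cube_parity {α : Eis} (h : Odd (norm α)) :
    Odd ((α^3).a) ∧ Even ((α^3).b) := by
  have hN : ¬ ((norm α : ZMod 2) = 0) := by
    rw [zmod2_cast_parity]
    exact int_odd_iff_not_two_dvd.1 h
  set x : ZMod 2 := (α.a : ZMod 2) with hx
  set y : ZMod 2 := (α.b : ZMod 2) with hy
  have hNc : ((norm α : ℤ) : ZMod 2) = x^2 - x*y + y^2 := by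
    rw [norm]; push_cast; ring
  have hac : (((α^3).a : ℤ) : ZMod 2) = x^3 - 3*x*y^2 + y^3 := by
    rw [pow3_a]; push_cast; ring
  have hbc : (((α^3).b : ℤ) : ZMod 2) = 3*x^2*y - 3*x*y^2 := by
    rw [pow3_b]; push_cast; ring
  have key1 : ∀ u v : ZMod 2, u^2 - u*v + v^2 ≠ 0 → u^3 - 3*u*v^2 + v^3 ≠ 0 := by decide
  have key2 : ∀ u v : ZMod 2, (3:ZMod 2)*u^2*v - 3*u*v^2 = 0 := by decide
  constructor
  · rw [int_odd_iff_not_two_dvd, ← zmod2_cast_parity, hac]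
    exact key1 x y (by rw [← hNc]; exact hN)
  · rw [← int_two_dvd_iff_even, ← zmod2_cast_parity, hbc]
    exact key2 x y

lemma omega_cube : (⟨0,1⟩ : Eis)^3 = 1 := by decide

lemma omega_sq_cube : (⟨-1,-1⟩ : Eis)^3 = 1 := by decide

/-- Euler-style parametrization of `S² + 3T² = v³`. -/
theorem euler_param (S T v : ℤ) (hco : IsCoprime S T) (hodd : Odd (S + T))
    (heq : S^2 + 3*T^2 = v^3) :
    ∃ m n : ℤ, S = m^3 - 9*m*n^2 ∧ T = 3*m^2*n - 3*n^3 := by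
  set ξ : Eis := ⟨S + T, 2*T⟩ with hxi
  have hξa : ξ.a = S + T := rfl
  have hξb : ξ.b = 2*T := rfl
  have hnormξ : norm ξ = S^2 + 3*T^2 := by rw [norm, hξa, hξb]; ring
  have hNodd : Odd (S^2 + 3*T^2) := by
    rcases Int.even_or_odd S with hS | hS
    · have hT : Odd T := by
        rcases Int.even_or_odd T with hT | hT
        · exact absurd (hS.add hT) (Int.not_even_iff_odd.2 hodd)
        · exact hT
      obtain ⟨k, hk⟩ := hS
      obtain ⟨l, hl⟩ := hT
      exact ⟨2*k^2 + 6*l^2 + 6*l + 1, by rw [hk, hl]; ring⟩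
    · have hT : Even T := by
        rcases Int.even_or_odd T with hT | hT
        · exact hT
        · exact absurd (hS.add_odd hT) (Int.not_even_iff_odd.2 hodd)
      obtain ⟨k, hk⟩ := hS
      obtain ⟨l, hl⟩ := hT
      exact ⟨2*k^2 + 2*k + 6*l^2, by rw [hk, hl]; ring⟩
  have hv3 : ¬ ((3:ℤ) ∣ v) := by
    intro h3
    have h27 : (27:ℤ) ∣ v^3 := by
      obtain ⟨w, rfl⟩ := h3
      exact ⟨w^3, by ring⟩
    have hd3 : (3:ℤ) ∣ S^2 + 3*T^2 := by
      rw [heq]; exact dvd_trans (by norm_num) h27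
    have h3S : (3:ℤ) ∣ S := by
      have h1 : (3:ℤ) ∣ S^2 := by
        have h2 := dvd_sub hd3 (⟨T^2, rfl⟩ : (3:ℤ) ∣ 3*T^2)
        rw [show S^2 + 3*T^2 - 3*T^2 = S^2 by ring] at h2
        exact h2
      exact Int.prime_three.dvd_of_dvd_pow h1
    have h3T : (3:ℤ) ∣ T := by
      obtain ⟨S', rfl⟩ := h3S
      have h1 : (9:ℤ) ∣ (3*S')^2 + 3*T^2 := by
        rw [heq]; exact dvd_trans (by norm_num) h27
      have h2 : (9:ℤ) ∣ (3*S')^2 := ⟨S'^2, by ring⟩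
      have h9 := dvd_sub h1 h2
      rw [show (3*S')^2 + 3*T^2 - (3*S')^2 = 3*T^2 by ring] at h9
      obtain ⟨c, hc⟩ := h9
      have h3T2 : (3:ℤ) ∣ T^2 := ⟨c, by linarith⟩
      exact Int.prime_three.dvd_of_dvd_pow h3T2
    exact (Int.prime_three.not_unit) (hco.isUnit_of_dvd' h3S h3T)
  have hξ0 : ξ ≠ 0 := by
    intro h0
    have hz : S^2 + 3*T^2 = 0 := by rw [← hnormξ, h0]; rfl
    rw [hz] at hNodd
    exact (Int.not_even_iff_odd.2 hNodd) ⟨0, by ring⟩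
  have hcop : IsCoprime ξ (conj ξ) := by
    apply isCoprime_of_prime_dvd
    · rintro ⟨h1, _⟩; exact hξ0 h1
    · intro π hπ hd1 hd2
      have hNdvd : norm π ∣ v^3 := by
        rw [← heq, ← hnormξ]
        exact norm_dvd_of_dvd hd1
      have hNodd' : Odd (norm π) := by
        rw [int_odd_iff_not_two_dvd]
        intro h2
        have h2' : (2:ℤ) ∣ v^3 := h2.trans hNdvd
        rw [← heq] at h2'
        exact (int_odd_iff_not_two_dvd.1 hNodd) h2'
      have hπ2 : ¬ (π ∣ ((2:ℤ) : Eis)) := by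
        intro h2
        have hd4 : norm π ∣ 4 := by
          have h' := norm_dvd_of_dvd h2
          have h42 : norm ((2:ℤ) : Eis) = 4 := by rw [intCast_mk, norm]; norm_num
          rwa [h42] at h'
        have h0 := norm_nonneg π
        have hn2 : ¬ ((2:ℤ) ∣ norm π) := int_odd_iff_not_two_dvd.1 hNodd'
        have hle : norm π ≤ 4 := Int.le_of_dvd (by norm_num) hd4
        have h1 : norm π = 1 := by
          set k := norm π with hk
          interval_cases k <;> omega
        exact hπ.not_unit (isUnit_iff_norm.2 h1)
      have hsum : ξ + conj ξ = ((2*S : ℤ) : Eis) := by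
        rw [conj, intCast_mk]; ext <;> simp [hξa, hξb] <;> ring
      have hdiff : ξ - conj ξ = ((2*T : ℤ) : Eis) * ⟨1,2⟩ := by
        rw [conj, intCast_mk]; ext <;> simp [hξa, hξb] <;> ring
      have hdS : π ∣ ((2:ℤ) : Eis) * ((S:ℤ) : Eis) := by
        rw [← Int.cast_mul]
        exact hsum ▸ dvd_add hd1 hd2
      have hdT : π ∣ ((2:ℤ) : Eis) * ((T:ℤ) : Eis) * ⟨1,2⟩ := by
        rw [← Int.cast_mul]
        exact hdiff ▸ dvd_sub hd1 hd2
      have hdvd_one : π ∣ (1 : Eis) := by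
        rcases (hπ.dvd_mul.1 hdS) with h2 | hS'
        · exact absurd h2 hπ2
        · rcases (hπ.dvd_mul.1 hdT) with h2T | hsqrt
          · rcases (hπ.dvd_mul.1 h2T) with h2 | hT'
            · exact absurd h2 hπ2
            · obtain ⟨u, w, huw⟩ := hco
              have hone : π ∣ ((u*S + w*T : ℤ) : Eis) := by
                push_cast
                exact dvd_add (Dvd.dvd.mul_left hS' _) (Dvd.dvd.mul_left hT' _)
              rwa [huw, Int.cast_one] at hone
          · have hd3 : norm π ∣ 3 := by
              have h' := norm_dvd_of_dvd hsqrt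
              have h3 : norm (⟨1,2⟩ : Eis) = 3 := by rw [norm]; norm_num
              rwa [h3] at h'
            have h0 := norm_nonneg π
            have hle : norm π ≤ 3 := Int.le_of_dvd (by norm_num) hd3
            have h13 : norm π = 1 ∨ norm π = 3 := by
              set k := norm π with hk
              interval_cases k <;> omega
            rcases h13 with h1 | h3'
            · exact absurd (isUnit_iff_norm.2 h1) hπ.not_unit
            · exfalso
              have hdv : (3:ℤ) ∣ v^3 := h3' ▸ hNdvd
              exact hv3 (Int.prime_three.dvd_of_dvd_pow hdv)
      exact hπ.not_unit (isUnit_of_dvd_one hdvd_one)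
  have hprod : ξ * conj ξ = ((v : ℤ) : Eis)^3 := by
    rw [mul_conj, hnormξ, heq, ← intCast_mk]
    push_cast
    ring
  obtain ⟨α, hα⟩ := exists_associated_pow_of_mul_eq_pow' hcop hprod
  obtain ⟨u, hu⟩ := hα
  have hnormu : norm (u : Eis) = 1 := isUnit_iff_norm.1 u.isUnit
  have hNα3 : Odd (norm (α^3)) := by
    have h1 : norm (α^3) * norm (u:Eis) = S^2 + 3*T^2 := by
      rw [← norm_mul, hu, hnormξ]
    rw [hnormu, mul_one] at h1
    rw [h1]; exact hNodd
  have hNα : Odd (norm α) := by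
    have h1 : norm (α^3) = (norm α)^3 := by
      rw [pow3_def, norm_mul, norm_mul]; ring
    rw [h1] at hNα3
    rcases Int.even_or_odd (norm α) with he | ho
    · exfalso
      obtain ⟨k, hk⟩ := he
      rw [← Int.not_even_iff_odd] at hNα3
      exact hNα3 ⟨4*k^3, by rw [hk]; ring⟩
    · exact ho
  obtain ⟨hAodd, hBeven⟩ := cube_parity hNα
  have hbeven : Even (ξ.b) := ⟨T, by rw [hξb]; ring⟩
  -- rule out the four non-±1 units
  have hβ : ∃ β : Eis, β^3 = ξ := by
    rcases unit_cases u.isUnit with h | h | h | h | h | h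
    · refine ⟨α, ?_⟩
      rw [← hu, h, show (⟨1,0⟩ : Eis) = 1 from rfl, mul_one]
    · refine ⟨-α, ?_⟩
      rw [← hu, h]
      ext <;> simp [pow3_a, pow3_b] <;> ring
    · exfalso
      have hb : ξ.b = (α^3).a - (α^3).b := by
        rw [← hu, h]; simp
      rw [hb] at hbeven
      exact (Int.not_odd_iff_even.2 hbeven) (hAodd.sub_even hBeven)
    · exfalso
      have hb : ξ.b = -(α^3).a + (α^3).b := by
        rw [← hu, h]; simp
      rw [hb] at hbeven
      have : Odd (-(α^3).a + (α^3).b) := (hAodd.neg).add_even hBeven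
      exact (Int.not_odd_iff_even.2 hbeven) this
    · exfalso
      have hb : ξ.b = (α^3).a := by
        rw [← hu, h]; simp
      rw [hb] at hbeven
      exact (Int.not_odd_iff_even.2 hbeven) hAodd
    · exfalso
      have hb : ξ.b = -(α^3).a := by
        rw [← hu, h]; simp
      rw [hb] at hbeven
      exact (Int.not_odd_iff_even.2 hbeven) hAodd.neg
  obtain ⟨β, hβ3⟩ := hβ
  have hNβ : Odd (norm β) := by
    have h1 : norm (β^3) = (norm β)^3 := by
      rw [pow3_def, norm_mul, norm_mul]; ring
    have h2 : (norm β)^3 = S^2 + 3*T^2 := by rw [← h1, hβ3, hnormξ]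
    rcases Int.even_or_odd (norm β) with he | ho
    · exfalso
      obtain ⟨k, hk⟩ := he
      have : Even (S^2+3*T^2) := ⟨4*k^3, by rw [← h2, hk]; ring⟩
      exact (Int.not_even_iff_odd.2 hNodd) this
    · exact ho
  have hnotboth : ¬ (Even β.a ∧ Even β.b) := by
    rintro ⟨⟨k, hk⟩, ⟨l, hl⟩⟩
    have : Even (norm β) := ⟨2*k^2 - 2*k*l + 2*l^2, by rw [norm, hk, hl]; ring⟩
    exact (Int.not_even_iff_odd.2 hNβ) this
  -- choose γ among β, ωβ, ω²β with γ.b even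
  have hγ : ∃ γ : Eis, γ^3 = ξ ∧ Even γ.b := by
    rcases Int.even_or_odd β.b with hb | hb
    · exact ⟨β, hβ3, hb⟩
    · rcases Int.even_or_odd β.a with ha | ha
      · refine ⟨⟨-1,-1⟩ * β, ?_, ?_⟩
        · rw [mul_pow, omega_sq_cube, one_mul, hβ3]
        · have : ((⟨-1,-1⟩ : Eis) * β).b = -β.a := by simp
          rw [this]
          exact ha.neg
      · refine ⟨⟨0,1⟩ * β, ?_, ?_⟩
        · rw [mul_pow, omega_cube, one_mul, hβ3]
        · have : ((⟨0,1⟩ : Eis) * β).b = β.a - β.b := by simp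
          rw [this]
          exact ha.sub_odd hb
  obtain ⟨γ, hγ3, hγb⟩ := hγ
  obtain ⟨n, hn⟩ := hγb
  refine ⟨γ.a - n, n, ?_, ?_⟩
  · have e1 : (γ^3).a = ξ.a := by rw [hγ3]
    rw [pow3_a, hξa] at e1
    have e2 : (γ^3).b = ξ.b := by rw [hγ3]
    rw [pow3_b, hξb] at e2
    have hsplit : γ.a^3 - 3*γ.a*γ.b^2 + γ.b^3
        = ((γ.a-n)^3 - 9*(γ.a-n)*n^2) + (3*(γ.a-n)^2*n - 3*n^3) := by
      rw [hn]; ring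
    have hTeq : 2*T = 2*(3*(γ.a-n)^2*n - 3*n^3) := by
      rw [← e2, hn]; ring
    have hT : T = 3*(γ.a-n)^2*n - 3*n^3 := by linarith
    linarith [e1, hsplit]
  · have e2 : (γ^3).b = ξ.b := by rw [hγ3]
    rw [pow3_b, hξb] at e2
    have hTeq : 2*T = 2*(3*(γ.a-n)^2*n - 3*n^3) := by
      rw [← e2, hn]; ring
    linarith

end Eis

open Eis (int_odd_iff_not_two_dvd int_two_dvd_iff_even euler_param)

section NumberTheory

/-- no common prime divisor implies coprime, over ℤ -/
lemma int_coprime_of_no_common_prime {a b : ℤ} (h0 : ¬ (a = 0 ∧ b = 0))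
    (H : ∀ q : ℤ, Prime q → q ∣ a → q ∣ b → False) : IsCoprime a b :=
  isCoprime_of_prime_dvd h0 (fun q hq hqa hqb => H q hq hqa hqb)

lemma int_prime_dvd_of_dvd_three {q : ℤ} (hq : Prime q) (h3 : q ∣ 3) : (3:ℤ) ∣ q := by
  have h1 : q.natAbs ∣ 3 := by
    have := Int.natAbs_dvd_natAbs.mpr h3
    simpa using this
  have h2 : q.natAbs.Prime := Int.prime_iff_natAbs_prime.1 hq
  have h3' : q.natAbs = 3 := by
    rcases (Nat.Prime.eq_one_or_self_of_dvd (by norm_num) _ h1) with h | h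
    · exact absurd h h2.ne_one
    · exact h
  rcases Int.natAbs_eq q with h | h <;> rw [h, h3'] <;> norm_num

lemma int_prime_dvd_of_dvd_two {q : ℤ} (hq : Prime q) (h2 : q ∣ 2) : (2:ℤ) ∣ q := by
  have h1 : q.natAbs ∣ 2 := by
    have := Int.natAbs_dvd_natAbs.mpr h2
    simpa using this
  have hqp : q.natAbs.Prime := Int.prime_iff_natAbs_prime.1 hq
  have h3' : q.natAbs = 2 := by
    rcases (Nat.Prime.eq_one_or_self_of_dvd (by norm_num) _ h1) with h | h
    · exact absurd h hqp.ne_one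
    · exact h
  rcases Int.natAbs_eq q with h | h <;> rw [h, h3'] <;> norm_num

/-- For p prime ≡ 2 mod 3, p ≥ 5 : p does not divide S² + 3T² when gcd(S,T)=1. -/
lemma p_not_dvd_quad {p : ℕ} (hp : p.Prime) (hp5 : 5 ≤ p) (hp3 : p % 3 = 2) {S T : ℤ}
    (hco : IsCoprime S T) (hdvd : (p:ℤ) ∣ S^2 + 3*T^2) : False := by
  haveI : Fact p.Prime := ⟨hp⟩
  have hchar : ((S : ZMod p))^2 + 3*((T : ZMod p))^2 = 0 := by
    have h0 : (((S^2 + 3*T^2 : ℤ)) : ZMod p) = 0 :=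
      (ZMod.intCast_zmod_eq_zero_iff_dvd _ p).2 hdvd
    push_cast at h0
    linear_combination h0
  by_cases hT : (T : ZMod p) = 0
  · have hS : (S : ZMod p) = 0 := by
      rw [hT] at hchar
      have : ((S : ZMod p))^2 = 0 := by linear_combination hchar
      exact pow_eq_zero_iff (by norm_num) |>.1 this
    have hdS : (p:ℤ) ∣ S := (ZMod.intCast_zmod_eq_zero_iff_dvd _ p).1 hS
    have hdT : (p:ℤ) ∣ T := (ZMod.intCast_zmod_eq_zero_iff_dvd _ p).1 hT
    have : IsUnit ((p:ℤ)) := hco.isUnit_of_dvd' hdS hdT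
    rw [Int.isUnit_iff] at this
    omega
  · set w : ZMod p := (S : ZMod p) * (T : ZMod p)⁻¹ with hw
    have hw2 : w^2 = -3 := by
      have hTi : (T : ZMod p) * (T : ZMod p)⁻¹ = 1 := ZMod.mul_inv_of_unit _ (by
        exact Ne.isUnit hT)
      have : (S : ZMod p)^2 = -3 * ((T : ZMod p))^2 := by linear_combination hchar
      calc w^2 = (S : ZMod p)^2 * ((T : ZMod p)⁻¹)^2 := by rw [hw]; ring
        _ = -3 * (((T : ZMod p)) * (T : ZMod p)⁻¹)^2 := by rw [this]; ring
        _ = -3 := by rw [hTi]; ring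
    have h2ne : (2 : ZMod p) ≠ 0 := by
      intro h2
      have : ((2:ℕ) : ZMod p) = 0 := by exact_mod_cast h2
      have := (ZMod.natCast_eq_zero_iff 2 p).1 this
      have := Nat.le_of_dvd (by norm_num) this
      omega
    set ζ : ZMod p := (w - 1) * (2 : ZMod p)⁻¹ with hζ
    have h8 : (w-1)^3 = 8 := by linear_combination (w - 3) * hw2
    have h2i : (2 : ZMod p) * (2 : ZMod p)⁻¹ = 1 := ZMod.mul_inv_of_unit _ (Ne.isUnit h2ne)
    have hζ3 : ζ^3 = 1 := by
      calc ζ^3 = (w-1)^3 * ((2:ZMod p)⁻¹)^3 := by rw [hζ]; ring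
        _ = 8 * ((2:ZMod p)⁻¹)^3 := by rw [h8]
        _ = ((2:ZMod p) * (2:ZMod p)⁻¹)^3 := by ring
        _ = 1 := by rw [h2i]; ring
    have hζne : ζ ≠ 1 := by
      intro h1
      rw [hζ] at h1
      have hw3 : w = 3 := by
        field_simp at h1
        linear_combination h1
      have h12 : ((12:ℕ) : ZMod p) = 0 := by
        push_cast
        linear_combination hw2 - (w+3)*hw3
      have := (ZMod.natCast_eq_zero_iff 12 p).1 h12
      have hle := Nat.le_of_dvd (by norm_num) this
      interval_cases p <;> omega
    have hζ0 : IsUnit ζ := IsUnit.of_mul_eq_one (ζ^2) (by linear_combination hζ3)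
    obtain ⟨ζu, hζu⟩ := hζ0
    have hord3 : ζu^3 = 1 := by
      apply Units.ext
      rw [Units.val_pow_eq_pow_val, hζu]
      exact hζ3
    have hordd : orderOf ζu ∣ 3 := orderOf_dvd_of_pow_eq_one hord3
    have hordne : orderOf ζu ≠ 1 := fun h1 =>
      hζne (by rw [← hζu, orderOf_eq_one_iff.1 h1, Units.val_one])
    have hord : orderOf ζu = 3 := by
      rcases (Nat.Prime.eq_one_or_self_of_dvd (by norm_num) _ hordd) with h | h
      · exact absurd h hordne
      · exact h
    have hcard : orderOf ζu ∣ Fintype.card (ZMod p)ˣ := orderOf_dvd_card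
    rw [hord, ZMod.card_units p] at hcard
    omega

end NumberTheory

section Mod9

lemma zmod9_p {p : ℕ} (hmod : p % 9 = 5) : ((p:ℕ) : ZMod 9) = 5 := by
  have h1 : ((p % 9 : ℕ) : ZMod 9) = ((p:ℕ) : ZMod 9) := ZMod.natCast_mod p 9
  rw [← h1, hmod]
  norm_num

lemma three_dvd_of_cube_zmod9 {b : ℤ} (h : ((b:ZMod 9))^3 = 0) : (3:ℤ) ∣ b := by
  have h9 : ((9:ℕ):ℤ) ∣ b^3 :=
    (ZMod.intCast_zmod_eq_zero_iff_dvd (b^3) 9).1 (by push_cast; exact h)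
  have h3 : (3:ℤ) ∣ b^3 := dvd_trans (by norm_num) h9
  exact Int.prime_three.dvd_of_dvd_pow h3

lemma mod9_kill_1 {p : ℕ} (hmod : p % 9 = 5) {a b c : ℤ}
    (heq : b^3 + (p:ℤ)*c^3 = 2*a^3) : (3:ℤ) ∣ b ∧ (3:ℤ) ∣ c := by
  have D : ∀ A B C : ZMod 9, B^3 + 5*C^3 = 2*A^3 → B^3 = 0 ∧ C^3 = 0 := by decide
  have hc := congrArg (fun t : ℤ => (t : ZMod 9)) heq
  push_cast at hc
  rw [zmod9_p hmod] at hc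
  obtain ⟨h1, h2⟩ := D _ _ _ hc
  exact ⟨three_dvd_of_cube_zmod9 h1, three_dvd_of_cube_zmod9 h2⟩

lemma mod9_kill_2 {p : ℕ} (hmod : p % 9 = 5) {a b c : ℤ}
    (heq : b^3 = (p:ℤ)*c^3 + 2*a^3) : (3:ℤ) ∣ a ∧ (3:ℤ) ∣ b := by
  have D : ∀ A B C : ZMod 9, B^3 = 5*C^3 + 2*A^3 → A^3 = 0 ∧ B^3 = 0 := by decide
  have hc := congrArg (fun t : ℤ => (t : ZMod 9)) heq
  push_cast at hc
  rw [zmod9_p hmod] at hc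
  obtain ⟨h1, h2⟩ := D _ _ _ hc
  exact ⟨three_dvd_of_cube_zmod9 h1, three_dvd_of_cube_zmod9 h2⟩

lemma mod9_kill_3 {p : ℕ} (hmod : p % 9 = 5) {a b c : ℤ}
    (heq : (p:ℤ)*c^3 = b^3 + 2*a^3) : (3:ℤ) ∣ a ∧ (3:ℤ) ∣ b := by
  have D : ∀ A B C : ZMod 9, 5*C^3 = B^3 + 2*A^3 → A^3 = 0 ∧ B^3 = 0 := by decide
  have hc := congrArg (fun t : ℤ => (t : ZMod 9)) heq
  push_cast at hc
  rw [zmod9_p hmod] at hc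
  obtain ⟨h1, h2⟩ := D _ _ _ hc
  exact ⟨three_dvd_of_cube_zmod9 h1, three_dvd_of_cube_zmod9 h2⟩

end Mod9

section Splits

lemma cube_split {a b c : ℤ} (h : IsCoprime a b) (e : a * b = c^3) :
    (∃ r, a = r^3) ∧ (∃ s, b = s^3) :=
  ⟨Int.eq_pow_of_mul_eq_pow_odd_left h ⟨1, by norm_num⟩ e,
   Int.eq_pow_of_mul_eq_pow_odd_right h ⟨1, by norm_num⟩ e⟩

lemma triple_cube_split {f1 f2 f3 u : ℤ}
    (h12 : IsCoprime f1 f2) (h13 : IsCoprime f1 f3) (h23 : IsCoprime f2 f3)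
    (he : f1 * (f2 * f3) = u^3) :
    ∃ r s t, f1 = r^3 ∧ f2 = s^3 ∧ f3 = t^3 := by
  obtain ⟨⟨r, hr⟩, ⟨w, hw⟩⟩ := cube_split (h12.mul_right h13) he
  obtain ⟨⟨s, hs⟩, ⟨t, ht⟩⟩ := cube_split h23 hw
  exact ⟨r, s, t, hr, hs, ht⟩

lemma cube_inj {a b : ℤ} (h : a^3 = b^3) : a = b := by
  have := Odd.strictMono_pow (R := ℤ) (⟨1, by norm_num⟩ : Odd 3)
  exact this.injective h

end Splits

section Main

lemma even_cube {x : ℤ} (h : Even x) : Even (x^3) := by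
  obtain ⟨k, hk⟩ := h; exact ⟨4*k^3, by rw [hk]; ring⟩

lemma odd_cube {x : ℤ} (h : Odd x) : Odd (x^3) := by
  obtain ⟨k, hk⟩ := h; exact ⟨4*k^3+6*k^2+3*k, by rw [hk]; ring⟩

lemma not_unit_two : ¬ IsUnit (2:ℤ) := by rw [Int.isUnit_iff]; omega

lemma not_unit_three : ¬ IsUnit (3:ℤ) := by rw [Int.isUnit_iff]; omega

/-- coprimality of the parameters coming from `euler_param` -/
lemma param_coprime {S T m n : ℤ} (hco : IsCoprime S T) (hne : ¬(m = 0 ∧ n = 0))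
    (hS : S = m^3 - 9*m*n^2) (hT : T = 3*m^2*n - 3*n^3) : IsCoprime m n := by
  apply int_coprime_of_no_common_prime hne
  intro q hq hqm hqn
  have dS : q ∣ S := by
    rw [hS]
    exact dvd_sub (dvd_pow hqm (by norm_num)) ((hqm.mul_left 9).mul_right (n^2))
  have dT : q ∣ T := by
    rw [hT]
    exact dvd_sub (hqn.mul_left (3*m^2)) ((dvd_pow hqn (by norm_num)).mul_left 3)
  exact hq.not_unit (hco.isUnit_of_dvd' dS dT)

/-- parity of the parameters coming from `euler_param` -/
lemma param_parity {S T m n : ℤ} (hco : IsCoprime S T)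
    (hS : S = m^3 - 9*m*n^2) (hT : T = 3*m^2*n - 3*n^3) : Odd (m + n) := by
  rcases Int.even_or_odd m with hm | hm <;> rcases Int.even_or_odd n with hn | hn
  · exfalso
    obtain ⟨k, hk⟩ := hm
    obtain ⟨l, hl⟩ := hn
    have dS : (2:ℤ) ∣ S := ⟨4*k^3 - 36*k*l^2, by rw [hS, hk, hl]; ring⟩
    have dT : (2:ℤ) ∣ T := ⟨12*k^2*l - 12*l^3, by rw [hT, hk, hl]; ring⟩
    exact not_unit_two (hco.isUnit_of_dvd' dS dT)
  · exact hm.add_odd hn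
  · exact hm.add_even hn
  · exfalso
    obtain ⟨k, hk⟩ := hm
    obtain ⟨l, hl⟩ := hn
    have dS : (2:ℤ) ∣ S := ⟨(2*k+1)*(2*k^2+2*k-18*l^2-18*l-4),
      by rw [hS, hk, hl]; ring⟩
    have dT : (2:ℤ) ∣ T := ⟨6*(2*l+1)*(k^2+k-l^2-l), by rw [hT, hk, hl]; ring⟩
    exact not_unit_two (hco.isUnit_of_dvd' dS dT)

set_option maxHeartbeats 2000000 in
theorem no_cube_desc (p : ℕ) (hp : p.Prime) (hodd : Odd p) (hmod : p % 9 = 5) :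
    ∀ N : ℕ, ∀ z : ℤ, z.natAbs ≤ N → z ≠ 0 → ∀ x y : ℤ, x^3 + y^3 ≠ 2*(p:ℤ)*z^3 := by
  have hp5 : 5 ≤ p := by omega
  have hp3 : p % 3 = 2 := by omega
  have hpZ : Prime ((p:ℕ) : ℤ) := Nat.prime_iff_prime_int.1 hp
  have hpne0 : ((p:ℕ) : ℤ) ≠ 0 := by exact_mod_cast hp.ne_zero
  have h3p : ¬ ((3:ℤ) ∣ ((p:ℕ):ℤ)) := by
    intro h
    have h' : (3:ℕ) ∣ p := by exact_mod_cast h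
    omega
  have hpodd2 : p % 2 = 1 := Nat.odd_iff.1 hodd
  intro N
  induction N with
  | zero =>
    intro z hz hz0 x y heq
    exact hz0 (by omega)
  | succ N ih =>
    intro z hzN hz0 x y heq
    by_cases hco : IsCoprime x y
    swap
    · -- non-coprime: divide by a common prime and descend
      have hxy0 : ¬ (x = 0 ∧ y = 0) := by
        rintro ⟨rfl, rfl⟩
        have h0 : 2*((p:ℕ):ℤ)*z^3 = 0 := by linear_combination -heq
        rcases mul_eq_zero.1 h0 with h | h
        · rcases mul_eq_zero.1 h with h2 | h2
          · norm_num at h2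
          · exact hpne0 h2
        · exact hz0 (pow_eq_zero_iff (by norm_num : 3 ≠ 0) |>.1 h)
      have hq : ∃ q : ℤ, Prime q ∧ q ∣ x ∧ q ∣ y := by
        by_contra h'
        push_neg at h'
        exact hco (int_coprime_of_no_common_prime hxy0
          (fun q hq hqx hqy => h' q hq hqx hqy))
      obtain ⟨q, hq, hqx, hqy⟩ := hq
      have hqz : q ∣ z := by
        by_contra hqz
        have hcoqz : IsCoprime q z := (Prime.coprime_iff_not_dvd hq).2 hqz
        have hq3 : q^3 ∣ (2*((p:ℕ):ℤ))*z^3 := by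
          rw [show (2*((p:ℕ):ℤ))*z^3 = 2*((p:ℕ):ℤ)*z^3 by ring, ← heq]
          exact dvd_add (pow_dvd_pow_of_dvd hqx 3) (pow_dvd_pow_of_dvd hqy 3)
        have hq2p : q^3 ∣ 2*((p:ℕ):ℤ) := (IsCoprime.pow hcoqz).dvd_of_dvd_mul_right hq3
        have hqn : q.natAbs.Prime := Int.prime_iff_natAbs_prime.1 hq
        have hq2pn : q.natAbs^3 ∣ 2*p := by
          have h1 := Int.natAbs_dvd_natAbs.mpr hq2p
          rw [Int.natAbs_pow] at h1
          have h2 : (2*((p:ℕ):ℤ)).natAbs = 2*p := by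
            rw [Int.natAbs_mul]
            simp
          rwa [h2] at h1
        have hqd2p : q.natAbs ∣ 2*p := dvd_trans (dvd_pow_self _ (by norm_num)) hq2pn
        rcases (Nat.Prime.dvd_mul hqn).1 hqd2p with h2 | hp'
        · have he2 : q.natAbs = 2 := (Nat.prime_dvd_prime_iff_eq hqn (by norm_num)).1 h2
          rw [he2] at hq2pn
          have h8 : (8:ℕ) ∣ 2*p := by norm_num at hq2pn ⊢; exact hq2pn
          omega
        · have hep : q.natAbs = p := (Nat.prime_dvd_prime_iff_eq hqn hp).1 hp'
          rw [hep] at hq2pn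
          have hle := Nat.le_of_dvd (by omega) hq2pn
          have hd : 25 ≤ p*p := Nat.mul_le_mul hp5 hp5
          nlinarith [hle, hd, hp5]
      obtain ⟨x1, rfl⟩ := hqx
      obtain ⟨y1, rfl⟩ := hqy
      obtain ⟨z1, rfl⟩ := hqz
      have hq0 : q ≠ 0 := hq.ne_zero
      have heq1 : x1^3 + y1^3 = 2*((p:ℕ):ℤ)*z1^3 := by
        have h3 : q^3 * (x1^3 + y1^3) = q^3 * (2*((p:ℕ):ℤ)*z1^3) := by
          linear_combination heq
        exact mul_left_cancel₀ (pow_ne_zero 3 hq0) h3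
      have hz10 : z1 ≠ 0 := by
        intro h; rw [h] at hz0; simp at hz0
      have hq2 : 2 ≤ q.natAbs := (Int.prime_iff_natAbs_prime.1 hq).two_le
      have hsz : z1.natAbs ≤ N := by
        have h1 : (q*z1).natAbs = q.natAbs * z1.natAbs := Int.natAbs_mul q z1
        have h2 : 2*z1.natAbs ≤ q.natAbs * z1.natAbs :=
          Nat.mul_le_mul_right _ hq2
        have h3 : 1 ≤ z1.natAbs := Int.natAbs_pos.2 hz10
        omega
      exact ih z1 hsz hz10 x1 y1 heq1
    -- coprime case
    · have hbodd : Odd x ∧ Odd y := by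
        rcases Int.even_or_odd x with hxE | hxO <;> rcases Int.even_or_odd y with hyE | hyO
        · exact absurd (hco.isUnit_of_dvd' (int_two_dvd_iff_even.2 hxE)
            (int_two_dvd_iff_even.2 hyE)) not_unit_two
        · exfalso
          have hS : Odd (x^3 + y^3) := (even_cube hxE).add_odd (odd_cube hyO)
          have hE : Even (x^3 + y^3) := by
            rw [heq]; exact ⟨((p:ℕ):ℤ)*z^3, by ring⟩
          rw [Int.odd_iff] at hS; rw [Int.even_iff] at hE; omega
        · exfalso
          have hS : Odd (x^3 + y^3) := (odd_cube hxO).add_even (even_cube hyE)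
          have hE : Even (x^3 + y^3) := by
            rw [heq]; exact ⟨((p:ℕ):ℤ)*z^3, by ring⟩
          rw [Int.odd_iff] at hS; rw [Int.even_iff] at hE; omega
        · exact ⟨hxO, hyO⟩
      obtain ⟨hxO, hyO⟩ := hbodd
      obtain ⟨r, hr⟩ := hxO.add_odd hyO
      obtain ⟨s, hs⟩ := hxO.sub_odd hyO
      have hx' : x = r + s := by omega
      have hy' : y = r - s := by omega
      have hrs_eq : r * (r^2+3*s^2) = ((p:ℕ):ℤ) * z^3 := by
        have h2 : 2*(r * (r^2+3*s^2)) = 2*(((p:ℕ):ℤ) * z^3) := by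
          rw [hx', hy'] at heq
          linear_combination heq
        exact mul_left_cancel₀ two_ne_zero h2
      have hcors : IsCoprime r s := by
        obtain ⟨u, v, huv⟩ := hco
        exact ⟨u + v, u - v, by rw [hx', hy'] at huv; linear_combination huv⟩
      have hrsodd : Odd (r + s) := by rw [← hx']; exact hxO
      have hr0 : r ≠ 0 := by
        intro h0
        have h1 : ((p:ℕ):ℤ) * z^3 = 0 := by rw [← hrs_eq, h0]; ring
        rcases mul_eq_zero.1 h1 with h | h
        · exact hpne0 h
        · exact hz0 (pow_eq_zero_iff (by norm_num : 3 ≠ 0) |>.1 h)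
      have hpr : ((p:ℕ):ℤ) ∣ r := by
        have hd : ((p:ℕ):ℤ) ∣ r * (r^2+3*s^2) := by
          rw [hrs_eq]; exact ⟨z^3, rfl⟩
        rcases hpZ.dvd_mul.1 hd with h | h
        · exact h
        · exact absurd h (fun hh => p_not_dvd_quad hp hp5 hp3 hcors hh)
      obtain ⟨r1, hr1⟩ := hpr
      have h_r1Q : r1 * (r^2+3*s^2) = z^3 := by
        apply mul_left_cancel₀ hpne0
        calc ((p:ℕ):ℤ) * (r1 * (r^2+3*s^2)) = (((p:ℕ):ℤ)*r1) * (r^2+3*s^2) := by ring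
          _ = r * (r^2+3*s^2) := by rw [← hr1]
          _ = ((p:ℕ):ℤ) * z^3 := hrs_eq
      by_cases h3z : (3:ℤ) ∣ z
      -- ============ CASE B : 3 ∣ z ============
      · have h3r : (3:ℤ) ∣ r := by
          have hd : (3:ℤ) ∣ r * (r^2+3*s^2) := by
            rw [hrs_eq]
            exact Dvd.dvd.mul_left (dvd_pow h3z (by norm_num)) _
          rcases Int.prime_three.dvd_mul.1 hd with h | h
          · exact h
          · have h1 : (3:ℤ) ∣ r^2 := by
              have h2 := dvd_sub h (⟨s^2, rfl⟩ : (3:ℤ) ∣ 3*s^2)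
              rw [show r^2 + 3*s^2 - 3*s^2 = r^2 by ring] at h2
              exact h2
            exact Int.prime_three.dvd_of_dvd_pow h1
        have h3s : ¬ ((3:ℤ) ∣ s) := by
          intro h
          exact not_unit_three (hcors.isUnit_of_dvd' h3r h)
        obtain ⟨t, ht⟩ := h3r
        have hs0 : s ≠ 0 := fun h => h3s (by rw [h]; exact dvd_zero 3)
        have hQ2pos : 0 < s^2 + 3*t^2 := by
          have h2 : 0 < s^2 := by rcases lt_or_gt_of_ne hs0 with h|h <;> nlinarith
          nlinarith [sq_nonneg t]
        have hco_st : IsCoprime s t := by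
          obtain ⟨u, v, huv⟩ := hcors
          exact ⟨v, 3*u, by rw [ht] at huv; linear_combination huv⟩
        have h3Q2 : ¬ ((3:ℤ) ∣ s^2+3*t^2) := by
          intro h
          have h1 : (3:ℤ) ∣ s^2 := by
            have h2 := dvd_sub h (⟨t^2, rfl⟩ : (3:ℤ) ∣ 3*t^2)
            rw [show s^2 + 3*t^2 - 3*t^2 = s^2 by ring] at h2
            exact h2
          exact h3s (Int.prime_three.dvd_of_dvd_pow h1)
        have h9eq : (9*t) * (s^2+3*t^2) = ((p:ℕ):ℤ) * z^3 := by
          rw [← hrs_eq, ht]; ring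
        have hpt : ((p:ℕ):ℤ) ∣ t := by
          have hd : ((p:ℕ):ℤ) ∣ (9*t) * (s^2+3*t^2) := by
            rw [h9eq]; exact ⟨z^3, rfl⟩
          rcases hpZ.dvd_mul.1 hd with h | h
          · rcases hpZ.dvd_mul.1 h with h9 | hT
            · exfalso
              have h9n : (p:ℕ) ∣ 9 := by exact_mod_cast h9
              have := Nat.le_of_dvd (by norm_num) h9n
              interval_cases p <;> omega
            · exact hT
          · exact absurd h (fun hh => p_not_dvd_quad hp hp5 hp3 hco_st hh)
        obtain ⟨t1, ht1⟩ := hpt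
        have h9t1 : (9*t1) * (s^2+3*t^2) = z^3 := by
          apply mul_left_cancel₀ hpne0
          calc ((p:ℕ):ℤ) * ((9*t1) * (s^2+3*t^2)) = (9*(((p:ℕ):ℤ)*t1)) * (s^2+3*t^2) := by ring
            _ = (9*t) * (s^2+3*t^2) := by rw [← ht1]
            _ = ((p:ℕ):ℤ) * z^3 := h9eq
        have hco9 : IsCoprime (9*t1) (s^2+3*t^2) := by
          apply int_coprime_of_no_common_prime
          · rintro ⟨_, h2⟩; linarith [hQ2pos]
          · intro q hq h1 h2
            rcases hq.dvd_mul.1 h1 with h9 | ht1'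
            · have h3q : q ∣ 3 := by
                have h9' : q ∣ (3:ℤ)*3 := by norm_num; exact h9
                rcases hq.dvd_mul.1 h9' with h|h <;> exact h
              have h3q' := int_prime_dvd_of_dvd_three hq h3q
              exact h3Q2 (dvd_trans h3q' h2)
            · have hqt : q ∣ t := by rw [ht1]; exact ht1'.mul_left _
              have hqs2 : q ∣ s^2 := by
                have h4 := dvd_sub h2 ((hqt.mul_right t).mul_left 3)
                rw [show s^2 + 3*t^2 - 3*(t*t) = s^2 by ring] at h4
                exact h4
              have hqs : q ∣ s := hq.dvd_of_dvd_pow hqs2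
              exact hq.not_unit (hco_st.isUnit_of_dvd' hqs hqt)
        obtain ⟨⟨u, hu3⟩, ⟨v, hv3⟩⟩ := cube_split hco9 h9t1
        have hzuv : z = u * v := by
          have h1 : (u*v)^3 = z^3 := by
            rw [show (u*v)^3 = u^3*v^3 by ring, ← hu3, ← hv3]
            exact h9t1
          exact (cube_inj h1).symm
        have h3u : (3:ℤ) ∣ u := by
          apply Int.prime_three.dvd_of_dvd_pow (n := 3)
          exact ⟨3*t1, by linarith [hu3]⟩
        obtain ⟨u1, hu1⟩ := h3u
        have ht1' : t1 = 3*u1^3 := by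
          rw [hu1] at hu3
          have h9' : 9*t1 = 27*u1^3 := by linear_combination hu3
          linarith
        have ht0 : t ≠ 0 := by
          intro h; rw [h] at ht; rw [ht] at hr0; simp at hr0
        have hu10 : u1 ≠ 0 := by
          intro h
          rw [h] at ht1'
          norm_num at ht1'
          rw [ht1'] at ht1
          norm_num at ht1
          rw [ht1] at ht0
          simp at ht0
        have hstodd : Odd (s + t) := by
          obtain ⟨k, hk⟩ := hrsodd
          exact ⟨k - t, by rw [ht] at hk; omega⟩
        obtain ⟨m, n, hsm, htn⟩ := euler_param s t v hco_st hstodd hv3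
        have hn0 : n ≠ 0 := by
          intro h
          rw [h] at htn
          norm_num at htn
          exact ht0 htn
        have hmn : IsCoprime m n := by
          apply param_coprime hco_st _ hsm htn
          rintro ⟨h1, h2⟩
          exact hn0 h2
        have hoddmn : Odd (m + n) := param_parity hco_st hsm htn
        have hfacB : n * ((m-n)*(m+n)) = ((p:ℕ):ℤ)*u1^3 := by
          apply mul_left_cancel₀ (show (3:ℤ) ≠ 0 by norm_num)
          calc (3:ℤ) * (n * ((m-n)*(m+n))) = 3*m^2*n - 3*n^3 := by ring
            _ = t := htn.symm
            _ = (3:ℤ)*(((p:ℕ):ℤ)*u1^3) := by rw [ht1, ht1']; ring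
        have hcB12 : IsCoprime n (m-n) := by
          apply int_coprime_of_no_common_prime
          · rintro ⟨h1, _⟩; exact hn0 h1
          · intro q hq h1 h2
            have hqm : q ∣ m := by
              have h3 := dvd_add h2 h1
              rw [show m - n + n = m by ring] at h3
              exact h3
            exact hq.not_unit (hmn.isUnit_of_dvd' hqm h1)
        have hcB13 : IsCoprime n (m+n) := by
          apply int_coprime_of_no_common_prime
          · rintro ⟨h1, _⟩; exact hn0 h1
          · intro q hq h1 h2
            have hqm : q ∣ m := by
              have h3 := dvd_sub h2 h1
              rw [show m + n - n = m by ring] at h3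
              exact h3
            exact hq.not_unit (hmn.isUnit_of_dvd' hqm h1)
        have hcB23 : IsCoprime (m-n) (m+n) := by
          apply int_coprime_of_no_common_prime
          · rintro ⟨h1, h2⟩
            exact hn0 (by omega)
          · intro q hq h1 h2
            by_cases hq2 : q ∣ 2
            · have h2q := int_prime_dvd_of_dvd_two hq hq2
              have hdvd : (2:ℤ) ∣ m - n := dvd_trans h2q h1
              have hodd' : Odd (m - n) := by
                obtain ⟨k, hk⟩ := hoddmn
                exact ⟨k - n, by omega⟩
              rw [Int.odd_iff] at hodd'
              omega
            · have hq2m : q ∣ 2*m := by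
                have h3 := dvd_add h1 h2
                rw [show (m-n) + (m+n) = 2*m by ring] at h3
                exact h3
              have hq2n : q ∣ 2*n := by
                have h3 := dvd_sub h2 h1
                rw [show (m+n) - (m-n) = 2*n by ring] at h3
                exact h3
              have hqm : q ∣ m := by
                rcases hq.dvd_mul.1 hq2m with h | h
                · exact absurd h hq2
                · exact h
              have hqn : q ∣ n := by
                rcases hq.dvd_mul.1 hq2n with h | h
                · exact absurd h hq2
                · exact h
              exact hq.not_unit (hmn.isUnit_of_dvd' hqm hqn)
        have hpdvdB : ((p:ℕ):ℤ) ∣ n * ((m-n)*(m+n)) := by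
          rw [hfacB]; exact ⟨u1^3, rfl⟩
        rcases hpZ.dvd_mul.1 hpdvdB with hpn | hp23
        · -- p ∣ n : descent
          obtain ⟨n1, hn1⟩ := hpn
          have hfac1 : n1 * ((m-n)*(m+n)) = u1^3 := by
            apply mul_left_cancel₀ hpne0
            calc ((p:ℕ):ℤ) * (n1 * ((m-n)*(m+n))) = (((p:ℕ):ℤ)*n1) * ((m-n)*(m+n)) := by ring
              _ = n * ((m-n)*(m+n)) := by rw [← hn1]
              _ = ((p:ℕ):ℤ)*u1^3 := hfacB
          have hdvdn1 : n1 ∣ n := ⟨((p:ℕ):ℤ), by rw [hn1]; ring⟩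
          have hcn1 : IsCoprime n1 (m-n) := hcB12.of_isCoprime_of_dvd_left hdvdn1
          have hcn2 : IsCoprime n1 (m+n) := hcB13.of_isCoprime_of_dvd_left hdvdn1
          obtain ⟨c, d, e, hc3, hd3, he3⟩ := triple_cube_split hcn1 hcn2 hcB23 hfac1
          have heq' : e^3 + (-d)^3 = 2*((p:ℕ):ℤ)*c^3 := by
            have h1 : (m+n) - (m-n) = 2*(((p:ℕ):ℤ)*c^3) := by
              rw [← hc3, ← hn1]; ring
            calc e^3 + (-d)^3 = (m+n) - (m-n) := by linear_combination -he3 + hd3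
              _ = 2*(((p:ℕ):ℤ)*c^3) := h1
              _ = 2*((p:ℕ):ℤ)*c^3 := by ring
          have hc0 : c ≠ 0 := by
            intro h0
            rw [h0] at hc3
            norm_num at hc3
            rw [hc3] at hn1
            norm_num at hn1
            exact hn0 hn1
          have hcu1 : c.natAbs ≤ u1.natAbs := by
            have hdvd : c^3 ∣ u1^3 := by
              rw [← hc3]; exact ⟨(m-n)*(m+n), hfac1.symm⟩
            have h1 : c.natAbs^3 ∣ u1.natAbs^3 := by
              rw [← Int.natAbs_pow, ← Int.natAbs_pow]
              exact Int.natAbs_dvd_natAbs.mpr hdvd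
            have h2 : c.natAbs^3 ≤ u1.natAbs^3 := Nat.le_of_dvd (by
              have h3 : 0 < u1.natAbs := Int.natAbs_pos.2 hu10
              positivity) h1
            by_contra hlt
            push_neg at hlt
            have h4 := Nat.pow_lt_pow_left hlt (n := 3) (by norm_num)
            omega
          have hszB : c.natAbs ≤ N := by
            have hv0 : v ≠ 0 := by
              intro h
              rw [h] at hv3
              norm_num at hv3
              linarith [hQ2pos]
            have h1 : z.natAbs = u.natAbs * v.natAbs := by rw [hzuv, Int.natAbs_mul]
            have h2 : u.natAbs = 3 * u1.natAbs := by
              rw [hu1, Int.natAbs_mul]; simp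
            have h5 : u.natAbs ≤ z.natAbs := by
              rw [h1]
              exact Nat.le_mul_of_pos_right _ (Int.natAbs_pos.2 hv0)
            have h6 : 1 ≤ u1.natAbs := Int.natAbs_pos.2 hu10
            omega
          exact ih c hszB hc0 e (-d) heq'
        · rcases hpZ.dvd_mul.1 hp23 with hpmn | hpmn
          · -- p ∣ m - n : mod 9 contradiction
            obtain ⟨f, hf⟩ := hpmn
            have hfac2 : f * (n*(m+n)) = u1^3 := by
              apply mul_left_cancel₀ hpne0
              calc ((p:ℕ):ℤ) * (f * (n*(m+n))) = n * ((((p:ℕ):ℤ)*f) * (m+n)) := by ring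
                _ = n * ((m-n)*(m+n)) := by rw [← hf]
                _ = ((p:ℕ):ℤ)*u1^3 := hfacB
            have hdvdf : f ∣ m - n := ⟨((p:ℕ):ℤ), by rw [hf]; ring⟩
            have hcf1 : IsCoprime f n := (hcB12.symm).of_isCoprime_of_dvd_left hdvdf
            have hcf2 : IsCoprime f (m+n) := hcB23.of_isCoprime_of_dvd_left hdvdf
            obtain ⟨c, a, b, hc3, ha3, hb3⟩ := triple_cube_split hcf1 hcf2 hcB13 hfac2
            have heqK : b^3 = ((p:ℕ):ℤ)*c^3 + 2*a^3 := by
              calc b^3 = m + n := hb3.symm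
                _ = (m-n) + 2*n := by ring
                _ = ((p:ℕ):ℤ)*c^3 + 2*a^3 := by rw [← ha3, ← hc3, ← hf]
            obtain ⟨h3a, h3b⟩ := mod9_kill_2 hmod heqK
            have d1 : (3:ℤ) ∣ n := by
              have h' : (3:ℤ) ∣ a^3 := dvd_pow h3a (by norm_num)
              rwa [← ha3] at h'
            have d2 : (3:ℤ) ∣ m+n := by
              have h' : (3:ℤ) ∣ b^3 := dvd_pow h3b (by norm_num)
              rwa [← hb3] at h'
            exact absurd (hcB13.isUnit_of_dvd' d1 d2) not_unit_three
          · -- p ∣ m + n : mod 9 contradiction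
            obtain ⟨f, hf⟩ := hpmn
            have hfac2 : f * (n*(m-n)) = u1^3 := by
              apply mul_left_cancel₀ hpne0
              calc ((p:ℕ):ℤ) * (f * (n*(m-n))) = n * ((m-n) * ((((p:ℕ):ℤ))*f)) := by ring
                _ = n * ((m-n)*(m+n)) := by rw [← hf]
                _ = ((p:ℕ):ℤ)*u1^3 := hfacB
            have hdvdf : f ∣ m + n := ⟨((p:ℕ):ℤ), by rw [hf]; ring⟩
            have hcf1 : IsCoprime f n := (hcB13.symm).of_isCoprime_of_dvd_left hdvdf
            have hcf2 : IsCoprime f (m-n) := (hcB23.symm).of_isCoprime_of_dvd_left hdvdf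
            obtain ⟨c, a, b, hc3, ha3, hb3⟩ := triple_cube_split hcf1 hcf2 hcB12 hfac2
            have heqK : ((p:ℕ):ℤ)*c^3 = b^3 + 2*a^3 := by
              calc ((p:ℕ):ℤ)*c^3 = m + n := by rw [← hc3, ← hf]
                _ = (m-n) + 2*n := by ring
                _ = b^3 + 2*a^3 := by rw [← hb3, ← ha3]
            obtain ⟨h3a, h3b⟩ := mod9_kill_3 hmod heqK
            have d1 : (3:ℤ) ∣ n := by
              have h' : (3:ℤ) ∣ a^3 := dvd_pow h3a (by norm_num)
              rwa [← ha3] at h'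
            have d2 : (3:ℤ) ∣ m-n := by
              have h' : (3:ℤ) ∣ b^3 := dvd_pow h3b (by norm_num)
              rwa [← hb3] at h'
            exact absurd (hcB12.isUnit_of_dvd' d1 d2) not_unit_three
      -- ============ CASE A : 3 ∤ z ============
      · have h3r : ¬ ((3:ℤ) ∣ r) := by
          intro h
          have hd : (3:ℤ) ∣ ((p:ℕ):ℤ) * z^3 := by
            rw [← hrs_eq]; exact h.mul_right _
          rcases Int.prime_three.dvd_mul.1 hd with h' | h'
          · exact h3p h'
          · exact h3z (Int.prime_three.dvd_of_dvd_pow h')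
        have hQpos : 0 < r^2 + 3*s^2 := by
          have h2 : 0 < r^2 := by rcases lt_or_gt_of_ne hr0 with h|h <;> nlinarith
          nlinarith [sq_nonneg s]
        have hco_r1Q : IsCoprime r1 (r^2+3*s^2) := by
          apply int_coprime_of_no_common_prime
          · rintro ⟨_, h2⟩; linarith [hQpos]
          · intro q hq h1 h2
            have hqr : q ∣ r := by rw [hr1]; exact h1.mul_left _
            have hq3s2 : q ∣ 3*s^2 := by
              have h4 := dvd_sub h2 ((hqr.mul_right r).mul_left 1)
              rw [show r^2 + 3*s^2 - 1*(r*r) = 3*s^2 by ring] at h4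
              exact h4
            rcases hq.dvd_mul.1 hq3s2 with h3 | hs2
            · have h3q := int_prime_dvd_of_dvd_three hq h3
              exact h3r (dvd_trans h3q hqr)
            · have hqs : q ∣ s := hq.dvd_of_dvd_pow hs2
              exact hq.not_unit (hcors.isUnit_of_dvd' hqr hqs)
        obtain ⟨⟨u, hu3⟩, ⟨v, hv3⟩⟩ := cube_split hco_r1Q h_r1Q
        have hzuv : z = u * v := by
          have h1 : (u*v)^3 = z^3 := by
            rw [show (u*v)^3 = u^3*v^3 by ring, ← hu3, ← hv3]
            exact h_r1Q
          exact (cube_inj h1).symm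
        have hr10 : r1 ≠ 0 := by
          intro h
          rw [h] at hr1
          norm_num at hr1
          exact hr0 hr1
        have hu0 : u ≠ 0 := by
          intro h
          rw [h] at hu3
          norm_num at hu3
          exact hr10 hu3
        have hvpos : 0 < v := by
          by_contra hv
          push_neg at hv
          have h1 : v^3 ≤ 0 := by nlinarith [sq_nonneg v]
          linarith [hQpos, hv3]
        have hvne1 : v ≠ 1 := by
          intro hv1
          rw [hv1] at hv3
          norm_num at hv3
          have hs00 : s = 0 := by nlinarith [sq_nonneg r, sq_nonneg s]
          have hr2 : r^2 = 1 := by nlinarith [sq_nonneg s]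
          have heq3 : r^3 = ((p:ℕ):ℤ)*z^3 := by
            have heq2 : 2*(r^3) = 2*(((p:ℕ):ℤ)*z^3) := by
              rw [hx', hy', hs00] at heq
              linear_combination heq
            exact mul_left_cancel₀ two_ne_zero heq2
          have hpdvd1 : ((p:ℕ):ℤ) ∣ 1 := by
            rcases (by
              have h1 : (r-1)*(r+1) = 0 := by linear_combination hr2
              rcases mul_eq_zero.1 h1 with h|h
              · left; linarith
              · right; linarith : r = 1 ∨ r = -1) with h | h
            · exact ⟨z^3, by rw [h] at heq3; linarith⟩
            · exact ⟨-z^3, by rw [h] at heq3; linarith⟩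
          have hple := Int.le_of_dvd one_pos hpdvd1
          have h5 : (5:ℤ) ≤ ((p:ℕ):ℤ) := by exact_mod_cast hp5
          omega
        obtain ⟨m, n, hrm, hsn⟩ := euler_param r s v hcors hrsodd hv3
        have hm0 : m ≠ 0 := by
          intro h
          rw [h] at hrm
          norm_num at hrm
          exact hr0 hrm
        have hmn : IsCoprime m n := by
          apply param_coprime hcors _ hrm hsn
          rintro ⟨h1, _⟩
          exact hm0 h1
        have hoddmn : Odd (m + n) := param_parity hcors hrm hsn
        have h3m : ¬ ((3:ℤ) ∣ m) := by
          intro h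
          apply h3r
          have hmr : m ∣ r := ⟨m^2 - 9*n^2, by rw [hrm]; ring⟩
          exact dvd_trans h hmr
        have hfacU : m * ((m-3*n)*(m+3*n)) = ((p:ℕ):ℤ)*u^3 := by
          calc m * ((m-3*n)*(m+3*n)) = m^3 - 9*m*n^2 := by ring
            _ = r := hrm.symm
            _ = ((p:ℕ):ℤ)*r1 := hr1
            _ = ((p:ℕ):ℤ)*u^3 := by rw [hu3]
        have hc12 : IsCoprime m (m-3*n) := by
          apply int_coprime_of_no_common_prime
          · rintro ⟨h1, _⟩; exact hm0 h1
          · intro q hq h1 h2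
            have hq3n : q ∣ 3*n := by
              have h3 := dvd_sub h1 h2
              rw [show m - (m-3*n) = 3*n by ring] at h3
              exact h3
            rcases hq.dvd_mul.1 hq3n with h3 | hn
            · exact h3m (dvd_trans (int_prime_dvd_of_dvd_three hq h3) h1)
            · exact hq.not_unit (hmn.isUnit_of_dvd' h1 hn)
        have hc13 : IsCoprime m (m+3*n) := by
          apply int_coprime_of_no_common_prime
          · rintro ⟨h1, _⟩; exact hm0 h1
          · intro q hq h1 h2
            have hq3n : q ∣ 3*n := by
              have h3 := dvd_sub h2 h1
              rw [show m + 3*n - m = 3*n by ring] at h3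
              exact h3
            rcases hq.dvd_mul.1 hq3n with h3 | hn
            · exact h3m (dvd_trans (int_prime_dvd_of_dvd_three hq h3) h1)
            · exact hq.not_unit (hmn.isUnit_of_dvd' h1 hn)
        have hc23 : IsCoprime (m-3*n) (m+3*n) := by
          apply int_coprime_of_no_common_prime
          · rintro ⟨h1, h2⟩
            exact hm0 (by omega)
          · intro q hq h1 h2
            by_cases hq2 : q ∣ 2
            · have h2q := int_prime_dvd_of_dvd_two hq hq2
              have hdvd : (2:ℤ) ∣ m - 3*n := dvd_trans h2q h1
              have hodd' : Odd (m - 3*n) := by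
                obtain ⟨k, hk⟩ := hoddmn
                exact ⟨k - 2*n, by omega⟩
              rw [Int.odd_iff] at hodd'
              omega
            · have hq2m : q ∣ 2*m := by
                have h3 := dvd_add h1 h2
                rw [show (m-3*n) + (m+3*n) = 2*m by ring] at h3
                exact h3
              have hq6n : q ∣ 2*(3*n) := by
                have h3 := dvd_sub h2 h1
                rw [show (m+3*n) - (m-3*n) = 2*(3*n) by ring] at h3
                exact h3
              have hqm : q ∣ m := by
                rcases hq.dvd_mul.1 hq2m with h | h
                · exact absurd h hq2
                · exact h
              have hq3n : q ∣ 3*n := by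
                rcases hq.dvd_mul.1 hq6n with h | h
                · exact absurd h hq2
                · exact h
              rcases hq.dvd_mul.1 hq3n with h3 | hn
              · exact h3m (dvd_trans (int_prime_dvd_of_dvd_three hq h3) hqm)
              · exact hq.not_unit (hmn.isUnit_of_dvd' hqm hn)
        have hpdvdA : ((p:ℕ):ℤ) ∣ m * ((m-3*n)*(m+3*n)) := by
          rw [hfacU]; exact ⟨u^3, rfl⟩
        rcases hpZ.dvd_mul.1 hpdvdA with hpm | hp23
        · -- p ∣ m : descent
          obtain ⟨m1, hm1⟩ := hpm
          have hfac1 : m1 * ((m-3*n)*(m+3*n)) = u^3 := by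
            apply mul_left_cancel₀ hpne0
            calc ((p:ℕ):ℤ) * (m1 * ((m-3*n)*(m+3*n)))
                = (((p:ℕ):ℤ)*m1) * ((m-3*n)*(m+3*n)) := by ring
              _ = m * ((m-3*n)*(m+3*n)) := by rw [← hm1]
              _ = ((p:ℕ):ℤ)*u^3 := hfacU
          have hdvdm1 : m1 ∣ m := ⟨((p:ℕ):ℤ), by rw [hm1]; ring⟩
          have hcm1 : IsCoprime m1 (m-3*n) := hc12.of_isCoprime_of_dvd_left hdvdm1
          have hcm2 : IsCoprime m1 (m+3*n) := hc13.of_isCoprime_of_dvd_left hdvdm1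
          obtain ⟨c, d, e, hc3, hd3, he3⟩ := triple_cube_split hcm1 hcm2 hc23 hfac1
          have heq' : d^3 + e^3 = 2*((p:ℕ):ℤ)*c^3 := by
            calc d^3 + e^3 = (m-3*n) + (m+3*n) := by rw [← hd3, ← he3]
              _ = 2*m := by ring
              _ = 2*((p:ℕ):ℤ)*c^3 := by rw [hm1, hc3]; ring
          have hc0 : c ≠ 0 := by
            intro h0
            rw [h0] at hc3
            norm_num at hc3
            rw [hc3] at hm1
            norm_num at hm1
            exact hm0 hm1
          have hcu : c.natAbs ≤ u.natAbs := by
            have hdvd : c^3 ∣ u^3 := by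
              rw [← hc3]; exact ⟨(m-3*n)*(m+3*n), hfac1.symm⟩
            have h1 : c.natAbs^3 ∣ u.natAbs^3 := by
              rw [← Int.natAbs_pow, ← Int.natAbs_pow]
              exact Int.natAbs_dvd_natAbs.mpr hdvd
            have h2 : c.natAbs^3 ≤ u.natAbs^3 := Nat.le_of_dvd (by
              have h3 : 0 < u.natAbs := Int.natAbs_pos.2 hu0
              positivity) h1
            by_contra hlt
            push_neg at hlt
            have h4 := Nat.pow_lt_pow_left hlt (n := 3) (by norm_num)
            omega
          have hsz : c.natAbs ≤ N := by
            have h1 : z.natAbs = u.natAbs * v.natAbs := by rw [hzuv, Int.natAbs_mul]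
            have hv2 : 2 ≤ v.natAbs := by omega
            have h5 : u.natAbs*2 ≤ z.natAbs := by
              rw [h1]
              exact Nat.mul_le_mul_left _ hv2
            have h6 : 1 ≤ u.natAbs := Int.natAbs_pos.2 hu0
            omega
          exact ih c hsz hc0 d e heq'
        · rcases hpZ.dvd_mul.1 hp23 with hpmn | hpmn
          · -- p ∣ m - 3n : mod 9 contradiction
            obtain ⟨f, hf⟩ := hpmn
            have hfac2 : f * (m*(m+3*n)) = u^3 := by
              apply mul_left_cancel₀ hpne0
              calc ((p:ℕ):ℤ) * (f * (m*(m+3*n))) = m * ((((p:ℕ):ℤ)*f) * (m+3*n)) := by ring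
                _ = m * ((m-3*n)*(m+3*n)) := by rw [← hf]
                _ = ((p:ℕ):ℤ)*u^3 := hfacU
            have hdvdf : f ∣ m - 3*n := ⟨((p:ℕ):ℤ), by rw [hf]; ring⟩
            have hcf1 : IsCoprime f m := (hc12.symm).of_isCoprime_of_dvd_left hdvdf
            have hcf2 : IsCoprime f (m+3*n) := hc23.of_isCoprime_of_dvd_left hdvdf
            obtain ⟨c, a, b, hc3, ha3, hb3⟩ := triple_cube_split hcf1 hcf2 hc13 hfac2
            have heqK : b^3 + ((p:ℕ):ℤ)*c^3 = 2*a^3 := by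
              calc b^3 + ((p:ℕ):ℤ)*c^3 = (m+3*n) + (m-3*n) := by rw [← hb3, ← hc3, ← hf]
                _ = 2*a^3 := by rw [← ha3]; ring
            obtain ⟨h3b, h3c⟩ := mod9_kill_1 hmod heqK
            have d1 : (3:ℤ) ∣ m+3*n := by
              have h' : (3:ℤ) ∣ b^3 := dvd_pow h3b (by norm_num)
              rwa [← hb3] at h'
            have d2 : (3:ℤ) ∣ m-3*n := by
              have h' : (3:ℤ) ∣ c^3 := dvd_pow h3c (by norm_num)
              rw [← hc3] at h'
              rw [hf]
              exact h'.mul_left _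
            exact absurd (hc23.isUnit_of_dvd' d2 d1) not_unit_three
          · -- p ∣ m + 3n : mod 9 contradiction
            obtain ⟨f, hf⟩ := hpmn
            have hfac2 : f * (m*(m-3*n)) = u^3 := by
              apply mul_left_cancel₀ hpne0
              calc ((p:ℕ):ℤ) * (f * (m*(m-3*n))) = m * ((m-3*n) * ((((p:ℕ):ℤ))*f)) := by ring
                _ = m * ((m-3*n)*(m+3*n)) := by rw [← hf]
                _ = ((p:ℕ):ℤ)*u^3 := hfacU
            have hdvdf : f ∣ m + 3*n := ⟨((p:ℕ):ℤ), by rw [hf]; ring⟩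
            have hcf1 : IsCoprime f m := (hc13.symm).of_isCoprime_of_dvd_left hdvdf
            have hcf2 : IsCoprime f (m-3*n) := (hc23.symm).of_isCoprime_of_dvd_left hdvdf
            obtain ⟨c, a, b, hc3, ha3, hb3⟩ := triple_cube_split hcf1 hcf2 hc12 hfac2
            have heqK : b^3 + ((p:ℕ):ℤ)*c^3 = 2*a^3 := by
              calc b^3 + ((p:ℕ):ℤ)*c^3 = (m-3*n) + (m+3*n) := by rw [← hb3, ← hc3, ← hf]
                _ = 2*a^3 := by rw [← ha3]; ring
            obtain ⟨h3b, h3c⟩ := mod9_kill_1 hmod heqK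
            have d1 : (3:ℤ) ∣ m-3*n := by
              have h' : (3:ℤ) ∣ b^3 := dvd_pow h3b (by norm_num)
              rwa [← hb3] at h'
            have d2 : (3:ℤ) ∣ m+3*n := by
              have h' : (3:ℤ) ∣ c^3 := dvd_pow h3c (by norm_num)
              rw [← hc3] at h'
              rw [hf]
              exact h'.mul_left _
            exact absurd (hc23.isUnit_of_dvd' d1 d2) not_unit_three

end Main

/-- A nonzero rational number is a *cube sum* if it is `a³ + b³` for nonzero rationals. -/
def IsCubeSum (r : ℚ) : Prop := ∃ a b : ℚ, a ≠ 0 ∧ b ≠ 0 ∧ a ^ 3 + b ^ 3 = r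

/-- A positive integer is *cube-free* if no cube of a prime divides it. -/
def CubeFree (n : ℕ) : Prop := ∀ p : ℕ, p.Prime → ¬ p ^ 3 ∣ n

/-- If `p` is an odd prime with `p ≡ 5 (mod 9)`, then `2p` is not a cube sum. -/
theorem not_isCubeSum_two_mul_of_five_mod_nine (p : ℕ) (hp : p.Prime) (hodd : Odd p)
    (hmod : p % 9 = 5) : ¬ IsCubeSum (2 * (p : ℚ)) := by
  rintro ⟨a, b, ha, hb, hab⟩
  have hda : ((a.den : ℚ)) ≠ 0 := Nat.cast_ne_zero.2 a.den_ne_zero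
  have hdb : ((b.den : ℚ)) ≠ 0 := Nat.cast_ne_zero.2 b.den_ne_zero
  set x : ℤ := a.num * (b.den : ℤ) with hx
  set y : ℤ := b.num * (a.den : ℤ) with hy
  set z : ℤ := (a.den : ℤ) * (b.den : ℤ) with hz
  have hz0 : z ≠ 0 := mul_ne_zero
    (Int.natCast_ne_zero.2 a.den_ne_zero) (Int.natCast_ne_zero.2 b.den_ne_zero)
  have h1 : ((a.num:ℚ) / (a.den:ℚ))^3 + ((b.num:ℚ)/(b.den:ℚ))^3 = 2*(p:ℚ) := by
    rw [Rat.num_div_den, Rat.num_div_den]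
    exact hab
  have h2 : (x:ℚ)^3 + (y:ℚ)^3 = 2*(p:ℚ)*(z:ℚ)^3 := by
    field_simp at h1
    rw [hx, hy, hz]
    push_cast
    linear_combination h1
  have h3 : x^3 + y^3 = 2*(p:ℤ)*z^3 := by exact_mod_cast h2
  exact no_cube_desc p hp hodd hmod z.natAbs z le_rfl hz0 x y h3
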